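/- The ternary sextic form q_3(x,y,z) = x^6 + y^6 + z^6 + 3(x^4 y^2 + x^2 y^4 + x^4 z^2 + x^2 z^4 + y^4 z^2 + y^2 z^4) - 100 x^2 y^2 z^2 is irreducible over the real numbers. -/

import Mathlib

open MvPolynomial

theorem hc_total_ne {σ K : Type*} [CommRing K] {f : MvPolynomial σ K} (hf : f ≠ 0) :
    homogeneousComponent f.totalDegree f ≠ 0 := by
  obtain ⟨m, hm, hms⟩ := Finset.exists_mem_eq_sup f.support
    (support_nonempty.mpr hf) (fun m => m.sum fun _ e => e)
  intro h0
  have : coeff m (homogeneousComponent f.totalDegree f) = coeff m f := by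
    rw [coeff_homogeneousComponent, if_pos]
    rw [Finsupp.degree, Finsupp.sum] at *
    exact hms.symm
  rw [h0, coeff_zero] at this
  exact (mem_support_iff.mp hm) this.symm

theorem hc_mul_top {σ K : Type*} [CommRing K] (f g : MvPolynomial σ K) :
    homogeneousComponent (f.totalDegree + g.totalDegree) (f * g)
      = homogeneousComponent f.totalDegree f * homogeneousComponent g.totalDegree g := by
  set df := f.totalDegree
  set dg := g.totalDegree
  conv_lhs => rw [← sum_homogeneousComponent f, ← sum_homogeneousComponent g]
  rw [Finset.sum_mul_sum, map_sum]
  rw [Finset.sum_eq_single df]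
  · rw [map_sum, Finset.sum_eq_single dg]
    · have h : (homogeneousComponent df f * homogeneousComponent dg g) ∈
        homogeneousSubmodule σ K (df + dg) := by
        rw [mem_homogeneousSubmodule]
        exact (homogeneousComponent_isHomogeneous df f).mul
          (homogeneousComponent_isHomogeneous dg g)
      rw [homogeneousComponent_of_mem h, if_pos rfl]
    · intro j hj hjne
      have h : (homogeneousComponent df f * homogeneousComponent j g) ∈
          homogeneousSubmodule σ K (df + j) := by
        rw [mem_homogeneousSubmodule]
        exact (homogeneousComponent_isHomogeneous df f).mul
          (homogeneousComponent_isHomogeneous j g)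
      rw [homogeneousComponent_of_mem h, if_neg (by omega)]
    · intro h; exact absurd (Finset.self_mem_range_succ dg) h
  · intro i hi hine
    rw [map_sum, Finset.sum_eq_zero]
    intro j hj
    have h : (homogeneousComponent i f * homogeneousComponent j g) ∈
        homogeneousSubmodule σ K (i + j) := by
      rw [mem_homogeneousSubmodule]
      exact (homogeneousComponent_isHomogeneous i f).mul
        (homogeneousComponent_isHomogeneous j g)
    rw [homogeneousComponent_of_mem h, if_neg]
    rw [Finset.mem_range] at hi hj
    omega
  · intro h; exact absurd (Finset.self_mem_range_succ df) h

theorem tdeg_mul {σ K : Type*} [CommRing K] [IsDomain K] {f g : MvPolynomial σ K}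
    (hf : f ≠ 0) (hg : g ≠ 0) :
    (f * g).totalDegree = f.totalDegree + g.totalDegree := by
  refine le_antisymm (totalDegree_mul f g) ?_
  by_contra hlt
  push_neg at hlt
  have h0 : homogeneousComponent (f.totalDegree + g.totalDegree) (f * g) = 0 :=
    homogeneousComponent_eq_zero _ _ hlt
  rw [hc_mul_top] at h0
  exact mul_ne_zero (hc_total_ne hf) (hc_total_ne hg) h0

noncomputable abbrev σm (k : Fin 3) : MvPolynomial (Fin 3) ℝ →ₐ[ℝ] MvPolynomial (Fin 3) ℝ :=
  aeval (fun i => if i = k then 0 else X i)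

theorem σm_monomial (k : Fin 3) (m : Fin 3 →₀ ℕ) (r : ℝ) :
    σm k (monomial m r) = if m k = 0 then monomial m r else 0 := by
  rw [aeval_monomial]
  by_cases h : m k = 0
  · rw [if_pos h]
    have : (m.prod fun i e => (if i = k then (0:MvPolynomial (Fin 3) ℝ) else X i) ^ e)
        = m.prod fun i e => (X i) ^ e := by
      apply Finsupp.prod_congr
      intro i hi
      have : i ≠ k := by
        intro hik; subst hik; exact (Finsupp.mem_support_iff.mp hi) h
      rw [if_neg this]
    rw [this, monomial_eq, algebraMap_eq]
  · rw [if_neg h]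
    have hk : k ∈ m.support := Finsupp.mem_support_iff.mpr h
    rw [Finsupp.prod, Finset.prod_eq_zero hk (by rw [if_pos rfl]; exact zero_pow h), mul_zero]

theorem coeff_σm (k : Fin 3) (h : MvPolynomial (Fin 3) ℝ) (m : Fin 3 →₀ ℕ) :
    coeff m (σm k h) = if m k = 0 then coeff m h else 0 := by
  induction h using MvPolynomial.induction_on' with
  | monomial n r =>
    rw [σm_monomial]
    by_cases hn : n k = 0
    · rw [if_pos hn, coeff_monomial]
      split_ifs with h1 h2 <;> simp_all
    · rw [if_neg hn, coeff_zero, coeff_monomial]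
      split_ifs with h1 h2 <;> simp_all
  | add p q hp hq =>
    rw [map_add, coeff_add, hp, hq, coeff_add]
    split_ifs <;> simp

theorem tdeg_σm_le (k : Fin 3) (h : MvPolynomial (Fin 3) ℝ) :
    (σm k h).totalDegree ≤ h.totalDegree := by
  apply totalDegree_le_of_support_subset
  intro m hm
  rw [mem_support_iff, coeff_σm] at hm
  rw [mem_support_iff]
  by_cases h0 : m k = 0
  · rwa [if_pos h0] at hm
  · rw [if_neg h0] at hm; exact absurd rfl hm

-- total degree zero implies constant
theorem eq_C_of_tdeg_zero {h : MvPolynomial (Fin 3) ℝ} (h0 : h.totalDegree = 0) :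
    h = C (coeff 0 h) := by
  rw [totalDegree_eq_zero_iff] at h0
  ext m
  rw [coeff_C]
  by_cases hm : m = 0
  · subst hm; rw [if_pos rfl]
  · rw [if_neg (Ne.symm hm)]
    by_contra hc
    have hms := mem_support_iff.mpr hc
    exact hm (Finsupp.ext fun x => h0 m hms x)

noncomputable abbrev A2 := MvPolynomial (Fin 2) ℝ

theorem roots_aux (j : Fin 2) :
    ((Polynomial.X ^ 2 + Polynomial.C (MvPolynomial.X j ^ 2 : A2)).map
      (algebraMap A2 (FractionRing A2))).roots = 0 := by
  set K := FractionRing A2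
  rw [Multiset.eq_zero_iff_forall_notMem]
  intro r hr
  rw [Polynomial.map_add, Polynomial.map_pow, Polynomial.map_X, Polynomial.map_C] at hr
  have hne : (Polynomial.X ^ 2 + Polynomial.C (algebraMap A2 K (MvPolynomial.X j ^ 2))) ≠ 0 :=
    (Polynomial.monic_X_pow_add_C _ (two_ne_zero)).ne_zero
  have hroot := (Polynomial.mem_roots hne).mp hr
  rw [Polynomial.IsRoot, Polynomial.eval_add, Polynomial.eval_pow, Polynomial.eval_X,
    Polynomial.eval_C] at hroot
  obtain ⟨a, b, hb, rfl⟩ := IsFractionRing.div_surjective (A := A2) r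
  have hbK : algebraMap A2 K b ≠ 0 := by
    simpa using nonZeroDivisors.ne_zero hb
  have key : algebraMap A2 K (a ^ 2 + MvPolynomial.X j ^ 2 * b ^ 2) = algebraMap A2 K 0 := by
    rw [map_add, map_mul, map_pow, map_pow, map_pow, map_zero]
    rw [div_pow, map_pow, div_add' _ _ _ (pow_ne_zero 2 hbK), div_eq_zero_iff] at hroot
    exact hroot.resolve_right (pow_ne_zero 2 hbK)
  have keyA : a ^ 2 + MvPolynomial.X j ^ 2 * b ^ 2 = 0 :=
    IsFractionRing.injective A2 K key
  have hXb : (MvPolynomial.X j : A2) * b = 0 := by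
    apply MvPolynomial.funext
    intro v
    have := congrArg (MvPolynomial.eval v) keyA
    simp only [map_add, map_mul, map_pow, MvPolynomial.eval_X, map_zero] at this
    have h2 : (v j * MvPolynomial.eval v b) ^ 2 = 0 := by nlinarith [sq_nonneg (MvPolynomial.eval v a)]
    rw [map_mul, map_zero, MvPolynomial.eval_X]
    exact pow_eq_zero_iff two_ne_zero |>.mp h2
  rcases mul_eq_zero.mp hXb with h | h
  · exact MvPolynomial.X_ne_zero j h
  · exact nonZeroDivisors.ne_zero hb h

theorem prime_aux (j : Fin 2) :
    Prime (Polynomial.X ^ 2 + Polynomial.C (MvPolynomial.X j ^ 2 : A2) : Polynomial A2) := by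
  rw [← UniqueFactorizationMonoid.irreducible_iff_prime]
  have hm : (Polynomial.X ^ 2 + Polynomial.C (MvPolynomial.X j ^ 2 : A2)).Monic :=
    Polynomial.monic_X_pow_add_C _ two_ne_zero
  rw [hm.irreducible_iff_irreducible_map_fraction_map (K := FractionRing A2)]
  apply (Polynomial.irreducible_iff_roots_eq_zero_of_degree_le_three ?_ ?_).mpr (roots_aux j)
  · rw [Polynomial.map_add, Polynomial.map_pow, Polynomial.map_X, Polynomial.map_C,
      Polynomial.natDegree_X_pow_add_C]
  · rw [Polynomial.map_add, Polynomial.map_pow, Polynomial.map_X, Polynomial.map_C,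
      Polynomial.natDegree_X_pow_add_C]
    omega

noncomputable abbrev R3 := MvPolynomial (Fin 3) ℝ

theorem prime_base : Prime ((MvPolynomial.X 0) ^ 2 + (MvPolynomial.X 1) ^ 2 : R3) := by
  have e := MvPolynomial.finSuccEquiv ℝ 2
  rw [← MulEquiv.prime_iff (MvPolynomial.finSuccEquiv ℝ 2).toRingEquiv.toMulEquiv]
  have : (MvPolynomial.finSuccEquiv ℝ 2) ((MvPolynomial.X 0) ^ 2 + (MvPolynomial.X 1) ^ 2 : R3)
      = Polynomial.X ^ 2 + Polynomial.C (MvPolynomial.X 0 ^ 2 : A2) := by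
    have h1 : (MvPolynomial.X 1 : R3) = MvPolynomial.X (Fin.succ 0) := rfl
    rw [map_add, map_pow, map_pow, MvPolynomial.finSuccEquiv_X_zero, h1,
      MvPolynomial.finSuccEquiv_X_succ, ← Polynomial.C_pow]
  rw [show ((MvPolynomial.finSuccEquiv ℝ 2).toRingEquiv.toMulEquiv
      ((MvPolynomial.X 0) ^ 2 + (MvPolynomial.X 1) ^ 2 : R3)) = _ from this]
  exact prime_aux 0

theorem prime_p2 : Prime ((MvPolynomial.X 0) ^ 2 + (MvPolynomial.X 1) ^ 2 : R3) := prime_base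

theorem prime_p1 : Prime ((MvPolynomial.X 0) ^ 2 + (MvPolynomial.X 2) ^ 2 : R3) := by
  rw [← MulEquiv.prime_iff (MvPolynomial.renameEquiv ℝ (Equiv.swap (1:Fin 3) 2)).toRingEquiv.toMulEquiv.symm]
  have : ((MvPolynomial.renameEquiv ℝ (Equiv.swap (1:Fin 3) 2)).toRingEquiv.toMulEquiv.symm
      ((MvPolynomial.X 0) ^ 2 + (MvPolynomial.X 2) ^ 2 : R3))
      = (MvPolynomial.X 0) ^ 2 + (MvPolynomial.X 1) ^ 2 := by
    show (MvPolynomial.renameEquiv ℝ (Equiv.swap (1:Fin 3) 2)).symm _ = _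
    simp [MvPolynomial.renameEquiv_symm, MvPolynomial.rename_X, Equiv.swap_apply_of_ne_of_ne]
  rw [this]
  exact prime_base

theorem prime_p0 : Prime ((MvPolynomial.X 1) ^ 2 + (MvPolynomial.X 2) ^ 2 : R3) := by
  rw [← MulEquiv.prime_iff (MvPolynomial.renameEquiv ℝ (Equiv.swap (0:Fin 3) 2)).toRingEquiv.toMulEquiv.symm]
  have : ((MvPolynomial.renameEquiv ℝ (Equiv.swap (0:Fin 3) 2)).toRingEquiv.toMulEquiv.symm
      ((MvPolynomial.X 1) ^ 2 + (MvPolynomial.X 2) ^ 2 : R3))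
      = (MvPolynomial.X 1) ^ 2 + (MvPolynomial.X 0) ^ 2 := by
    show (MvPolynomial.renameEquiv ℝ (Equiv.swap (0:Fin 3) 2)).symm _ = _
    simp [MvPolynomial.renameEquiv_symm, MvPolynomial.rename_X, Equiv.swap_apply_of_ne_of_ne]
  rw [this, add_comm]
  exact prime_base

noncomputable def q3 : MvPolynomial (Fin 3) ℝ :=
  X 0 ^ 6 + X 1 ^ 6 + X 2 ^ 6
    + 3 * (X 0 ^ 4 * X 1 ^ 2 + X 0 ^ 2 * X 1 ^ 4 + X 0 ^ 4 * X 2 ^ 2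
        + X 0 ^ 2 * X 2 ^ 4 + X 1 ^ 4 * X 2 ^ 2 + X 1 ^ 2 * X 2 ^ 4)
    - 100 * (X 0 ^ 2 * X 1 ^ 2 * X 2 ^ 2)

theorem q3_ne_zero : q3 ≠ 0 := by
  intro h
  have h2 := congrArg (MvPolynomial.eval (![1, 0, 0] : Fin 3 → ℝ)) h
  simp [q3] at h2

theorem q3_homog : q3.IsHomogeneous 6 := by
  have hX : ∀ (i : Fin 3) (n : ℕ), ((MvPolynomial.X i : R3) ^ n).IsHomogeneous n :=
    fun i n => by simpa using (MvPolynomial.isHomogeneous_X ℝ i).pow n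
  have hXX : ∀ (i j : Fin 3) (a b : ℕ),
      ((MvPolynomial.X i : R3) ^ a * MvPolynomial.X j ^ b).IsHomogeneous (a + b) :=
    fun i j a b => (hX i a).mul (hX j b)
  have h3 : (3 : R3) = MvPolynomial.C (3:ℝ) := (map_ofNat MvPolynomial.C 3).symm
  have h100 : (100 : R3) = MvPolynomial.C (100:ℝ) := (map_ofNat MvPolynomial.C 100).symm
  unfold q3
  rw [h3, h100]
  apply MvPolynomial.IsHomogeneous.sub
  · apply ((((hX 0 6).add (hX 1 6)).add (hX 2 6)).add)
    apply MvPolynomial.IsHomogeneous.C_mul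
    exact ((((((hXX 0 1 4 2).add (hXX 0 1 2 4)).add (hXX 0 2 4 2)).add
      (hXX 0 2 2 4)).add (hXX 1 2 4 2)).add (hXX 1 2 2 4))
  · exact MvPolynomial.IsHomogeneous.C_mul (((hX 0 2).mul (hX 1 2)).mul (hX 2 2)) _

theorem td_q3 : q3.totalDegree = 6 := q3_homog.totalDegree q3_ne_zero

theorem unit_tdeg_zero {u : R3} (h : IsUnit u) : u.totalDegree = 0 := by
  obtain ⟨v, hv⟩ := h.exists_right_inv
  have h1 : (1 : R3) ≠ 0 := one_ne_zero
  have hu0 : u ≠ 0 := by rintro rfl; rw [zero_mul] at hv; exact h1 hv.symm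
  have hv0 : v ≠ 0 := by rintro rfl; rw [mul_zero] at hv; exact h1 hv.symm
  have := tdeg_mul hu0 hv0
  rw [hv, MvPolynomial.totalDegree_one] at this
  omega

theorem unit_eq_C {u : R3} (h : IsUnit u) : ∃ c : ℝ, u = MvPolynomial.C c :=
  ⟨MvPolynomial.coeff 0 u, eq_C_of_tdeg_zero (unit_tdeg_zero h)⟩

theorem assoc_tdeg {x y : R3} (h : Associated x y) (hx : x ≠ 0) :
    y.totalDegree = x.totalDegree := by
  obtain ⟨u, hu⟩ := h
  have hu0 : (u : R3) ≠ 0 := u.ne_zero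
  rw [← hu, tdeg_mul hx hu0, unit_tdeg_zero u.isUnit, add_zero]

theorem homog_pp (i j : Fin 3) :
    ((MvPolynomial.X i : R3) ^ 2 + MvPolynomial.X j ^ 2).IsHomogeneous 2 := by
  simpa using ((MvPolynomial.isHomogeneous_X ℝ i).pow 2).add
    ((MvPolynomial.isHomogeneous_X ℝ j).pow 2)

theorem σ2_q3 : σm 2 q3 = ((MvPolynomial.X 0) ^ 2 + (MvPolynomial.X 1) ^ 2) ^ 3 := by
  simp [q3, map_ofNat]; ring

theorem σ1_q3 : σm 1 q3 = ((MvPolynomial.X 0) ^ 2 + (MvPolynomial.X 2) ^ 2) ^ 3 := by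
  simp [q3, map_ofNat]; ring

theorem σ0_q3 : σm 0 q3 = ((MvPolynomial.X 1) ^ 2 + (MvPolynomial.X 2) ^ 2) ^ 3 := by
  simp [q3, map_ofNat]; ring

theorem assoc_compl {x y p : R3} (hp0 : p ≠ 0) {a : ℕ} (ha : a ≤ 3) (hxy : x * y = p ^ 3)
    (hx : Associated (p ^ a) x) : Associated (p ^ (3 - a)) y := by
  obtain ⟨u, hu⟩ := hx
  have hcan : (u : R3) * y = p ^ (3 - a) := by
    apply mul_left_cancel₀ (pow_ne_zero a hp0)
    rw [← mul_assoc, hu, hxy, ← pow_add]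
    congr 1
    omega
  exact ⟨u⁻¹, by rw [← hcan, mul_comm ((u : R3)) y, mul_assoc, Units.mul_inv, mul_one]⟩

theorem sigma_form {f g : R3} (k : Fin 3) (p : R3) (hp : Prime p) (hph : p.IsHomogeneous 2)
    (hσq : σm k f * σm k g = p ^ 3) (hdf : f.totalDegree = 2) (hdg : g.totalDegree = 4) :
    ∃ c : ℝ, σm k f = MvPolynomial.C c * p := by
  have hp0 : p ≠ 0 := hp.ne_zero
  obtain ⟨a, ha3, hassoc⟩ := (dvd_prime_pow hp 3).mp ⟨σm k g, hσq.symm⟩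
  have hpn : ∀ n : ℕ, ((p ^ n : R3)).totalDegree = 2 * n := fun n =>
    (by simpa using hph.pow n : (p ^ n).IsHomogeneous (2 * n)).totalDegree (pow_ne_zero n hp0)
  have hσf0 : σm k f ≠ 0 := by
    have hprod : σm k f * σm k g ≠ 0 := by rw [hσq]; exact pow_ne_zero _ hp0
    exact left_ne_zero_of_mul hprod
  have htdf : (σm k f).totalDegree = 2 * a := by
    rw [← assoc_tdeg hassoc hσf0, hpn]
  have hle : 2 * a ≤ 2 := by
    rw [← htdf, ← hdf]; exact tdeg_σm_le k f
  have ha1 : a ≤ 1 := by omega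
  have hanz : a ≠ 0 := by
    intro ha0
    subst ha0
    have hg := assoc_compl hp0 (by omega) hσq hassoc.symm
    have := assoc_tdeg hg (pow_ne_zero _ hp0)
    rw [hpn] at this
    have h4 : (σm k g).totalDegree ≤ 4 := by rw [← hdg]; exact tdeg_σm_le k g
    omega
  have ha : a = 1 := by omega
  subst ha
  obtain ⟨u, hu⟩ := hassoc
  obtain ⟨c, hc⟩ := unit_eq_C (u⁻¹).isUnit
  have hf : σm k f = p ^ 1 * (↑u⁻¹ : R3) := by
    rw [← hu, mul_assoc, Units.mul_inv, mul_one]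
  exact ⟨c, by rw [hf, hc, pow_one, mul_comm]⟩

theorem cXX (i j : Fin 3) (c : ℝ) (hij : j ≠ i) :
    MvPolynomial.coeff (Finsupp.single i 2)
      (MvPolynomial.C c * ((MvPolynomial.X i : R3) ^ 2 + MvPolynomial.X j ^ 2)) = c := by
  rw [MvPolynomial.coeff_C_mul, MvPolynomial.coeff_add, MvPolynomial.coeff_X_pow,
    MvPolynomial.coeff_X_pow, if_pos rfl, if_neg, add_zero, mul_one]
  intro h
  exact hij (Finsupp.single_left_injective (two_ne_zero) h)

theorem key {f g : R3} (hfg : f * g = q3) (hdf : f.totalDegree = 2) (hdg : g.totalDegree = 4) :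
    False := by
  have hσ2 : σm 2 f * σm 2 g = ((MvPolynomial.X 0) ^ 2 + (MvPolynomial.X 1) ^ 2) ^ 3 := by
    rw [← map_mul, hfg, σ2_q3]
  have hσ1 : σm 1 f * σm 1 g = ((MvPolynomial.X 0) ^ 2 + (MvPolynomial.X 2) ^ 2) ^ 3 := by
    rw [← map_mul, hfg, σ1_q3]
  have hσ0 : σm 0 f * σm 0 g = ((MvPolynomial.X 1) ^ 2 + (MvPolynomial.X 2) ^ 2) ^ 3 := by
    rw [← map_mul, hfg, σ0_q3]
  obtain ⟨c2, hc2⟩ := sigma_form 2 _ prime_p2 (homog_pp 0 1) hσ2 hdf hdg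
  obtain ⟨c1, hc1⟩ := sigma_form 1 _ prime_p1 (homog_pp 0 2) hσ1 hdf hdg
  obtain ⟨c0, hc0⟩ := sigma_form 0 _ prime_p0 (homog_pp 1 2) hσ0 hdf hdg
  -- coefficient comparisons
  have hm1 : (Finsupp.single (0 : Fin 3) 2) 2 = 0 := by simp
  have hm1' : (Finsupp.single (0 : Fin 3) 2) 1 = 0 := by simp
  have hm2 : (Finsupp.single (1 : Fin 3) 2) 2 = 0 := by simp
  have hm2' : (Finsupp.single (1 : Fin 3) 2) 0 = 0 := by simp
  have e1 : MvPolynomial.coeff (Finsupp.single 0 2) f = c2 := by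
    have h := congrArg (MvPolynomial.coeff (Finsupp.single 0 2)) hc2
    rwa [coeff_σm, if_pos hm1, cXX 0 1 c2 (by decide)] at h
  have e2 : MvPolynomial.coeff (Finsupp.single 0 2) f = c1 := by
    have h := congrArg (MvPolynomial.coeff (Finsupp.single 0 2)) hc1
    rwa [coeff_σm, if_pos hm1', cXX 0 2 c1 (by decide)] at h
  have e3 : MvPolynomial.coeff (Finsupp.single 1 2) f = c2 := by
    have h := congrArg (MvPolynomial.coeff (Finsupp.single 1 2)) hc2
    rw [coeff_σm, if_pos hm2] at h
    rwa [show ((MvPolynomial.X 0 : R3) ^ 2 + MvPolynomial.X 1 ^ 2)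
        = (MvPolynomial.X 1 ^ 2 + MvPolynomial.X 0 ^ 2) from add_comm _ _,
      cXX 1 0 c2 (by decide)] at h
  have e4 : MvPolynomial.coeff (Finsupp.single 1 2) f = c0 := by
    have h := congrArg (MvPolynomial.coeff (Finsupp.single 1 2)) hc0
    rwa [coeff_σm, if_pos hm2', cXX 1 2 c0 (by decide)] at h
  have hc1eq : c1 = c2 := by rw [← e1, ← e2]
  have hc0eq : c0 = c2 := by rw [← e3, ← e4]
  rw [hc1eq] at hc1
  rw [hc0eq] at hc0
  set S : R3 := MvPolynomial.X 0 ^ 2 + MvPolynomial.X 1 ^ 2 + MvPolynomial.X 2 ^ 2 with hS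
  set F : R3 := f - MvPolynomial.C c2 * S with hFdef
  have hσC : ∀ (k : Fin 3) (c : ℝ), σm k (MvPolynomial.C c : R3) = MvPolynomial.C c := by
    intro k c; simp
  have hσ2S : σm 2 S = MvPolynomial.X 0 ^ 2 + MvPolynomial.X 1 ^ 2 := by rw [hS]; simp
  have hσ1S : σm 1 S = MvPolynomial.X 0 ^ 2 + MvPolynomial.X 2 ^ 2 := by rw [hS]; simp
  have hσ0S : σm 0 S = MvPolynomial.X 1 ^ 2 + MvPolynomial.X 2 ^ 2 := by rw [hS]; simp
  have hF2 : σm 2 F = 0 := by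
    rw [hFdef, map_sub, map_mul, hσC, hσ2S, hc2, sub_self]
  have hF1 : σm 1 F = 0 := by
    rw [hFdef, map_sub, map_mul, hσC, hσ1S, hc1, sub_self]
  have hF0 : σm 0 F = 0 := by
    rw [hFdef, map_sub, map_mul, hσC, hσ0S, hc0, sub_self]
  have hXle : ∀ i : Fin 3, ((MvPolynomial.X i : R3) ^ 2).totalDegree ≤ 2 := by
    intro i
    simpa using MvPolynomial.totalDegree_pow (MvPolynomial.X i : R3) 2
  have hSle : S.totalDegree ≤ 2 := by
    rw [hS]
    refine le_trans (MvPolynomial.totalDegree_add _ _) (max_le (le_trans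
      (MvPolynomial.totalDegree_add _ _) (max_le (hXle 0) (hXle 1))) (hXle 2))
  have hFle : F.totalDegree ≤ 2 := by
    rw [hFdef]
    refine le_trans (MvPolynomial.totalDegree_sub _ _) (max_le (le_of_eq hdf) ?_)
    refine le_trans (MvPolynomial.totalDegree_mul _ _) ?_
    simpa [MvPolynomial.totalDegree_C] using hSle
  have hF : F = 0 := by
    apply MvPolynomial.ext
    intro m
    rw [MvPolynomial.coeff_zero]
    by_cases h2 : m 2 = 0
    · have h := congrArg (MvPolynomial.coeff m) hF2
      rwa [coeff_σm, if_pos h2, MvPolynomial.coeff_zero] at h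
    by_cases h1 : m 1 = 0
    · have h := congrArg (MvPolynomial.coeff m) hF1
      rwa [coeff_σm, if_pos h1, MvPolynomial.coeff_zero] at h
    by_cases h0 : m 0 = 0
    · have h := congrArg (MvPolynomial.coeff m) hF0
      rwa [coeff_σm, if_pos h0, MvPolynomial.coeff_zero] at h
    apply MvPolynomial.coeff_eq_zero_of_totalDegree_lt
    have hsupp : m.support = Finset.univ := by
      apply Finset.eq_univ_iff_forall.mpr
      intro i
      fin_cases i <;> exact Finsupp.mem_support_iff.mpr (by assumption)
    have hsum : ∑ i ∈ m.support, m i = m 0 + m 1 + m 2 := by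
      rw [hsupp, Fin.sum_univ_three]
    omega
  have hfC : f = MvPolynomial.C c2 * S := by
    have := sub_eq_zero.mp (hFdef ▸ hF)
    exact this
  -- evaluate at the complex point (3, 4, 5i)
  set v : Fin 3 → ℂ := ![3, 4, 5 * Complex.I] with hv
  have hmul : MvPolynomial.aeval v f * MvPolynomial.aeval v g = MvPolynomial.aeval v q3 := by
    rw [← map_mul, hfg]
  have h525 : (5 * Complex.I) ^ 2 = -25 := by rw [mul_pow, Complex.I_sq]; norm_num
  have hvf : MvPolynomial.aeval v f = 0 := by
    rw [hfC, hS]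
    simp [hv]
    rw [h525]
    norm_num
  have hq3id : q3 = (MvPolynomial.X 0 ^ 2 + MvPolynomial.X 1 ^ 2 + MvPolynomial.X 2 ^ 2) ^ 3
      - 106 * (MvPolynomial.X 0 * MvPolynomial.X 1 * MvPolynomial.X 2) ^ 2 := by
    unfold q3
    ring
  have hI6 : (Complex.I : ℂ) ^ 6 = -1 := by
    rw [show (6 : ℕ) = 2 * 3 from rfl, pow_mul, Complex.I_sq]
    norm_num
  have hvq : MvPolynomial.aeval v q3 = 381600 := by
    rw [hq3id]
    simp [hv]
    ring_nf
    rw [hI6]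
    norm_num
  rw [hvf, zero_mul, hvq] at hmul
  norm_num at hmul

theorem q3_irreducible : Irreducible q3 := by
  constructor
  · intro hu
    have h := unit_tdeg_zero hu
    rw [td_q3] at h
    exact absurd h (by norm_num)
  · intro f g hq
    by_contra hcon
    push_neg at hcon
    obtain ⟨hfU, hgU⟩ := hcon
    have hfg : f * g = q3 := hq.symm
    have hf0 : f ≠ 0 := by
      rintro rfl; rw [zero_mul] at hfg; exact q3_ne_zero hfg.symm
    have hg0 : g ≠ 0 := by
      rintro rfl; rw [mul_zero] at hfg; exact q3_ne_zero hfg.symm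
    have hsum : f.totalDegree + g.totalDegree = 6 := by
      rw [← tdeg_mul hf0 hg0, hfg, td_q3]
    have hσ2 : σm 2 f * σm 2 g = ((MvPolynomial.X 0) ^ 2 + (MvPolynomial.X 1) ^ 2) ^ 3 := by
      rw [← map_mul, hfg, σ2_q3]
    set p : R3 := (MvPolynomial.X 0) ^ 2 + (MvPolynomial.X 1) ^ 2 with hp
    have hp0 : p ≠ 0 := prime_p2.ne_zero
    have hpn : ∀ n : ℕ, ((p ^ n : R3)).totalDegree = 2 * n := fun n =>
      (by simpa using (homog_pp 0 1).pow n : (p ^ n).IsHomogeneous (2 * n)).totalDegree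
        (pow_ne_zero n hp0)
    obtain ⟨a, ha3, hassoc⟩ := (dvd_prime_pow prime_p2 3).mp ⟨σm 2 g, hσ2.symm⟩
    have hσf0 : σm 2 f ≠ 0 := by
      have hprod : σm 2 f * σm 2 g ≠ 0 := by rw [hσ2]; exact pow_ne_zero _ hp0
      exact left_ne_zero_of_mul hprod
    have htdf : (σm 2 f).totalDegree = 2 * a := by
      rw [← assoc_tdeg hassoc hσf0, hpn]
    have hle1 : 2 * a ≤ f.totalDegree := by rw [← htdf]; exact tdeg_σm_le 2 f
    have hassocg := assoc_compl hp0 ha3 hσ2 hassoc.symm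
    have hσg0 : σm 2 g ≠ 0 := by
      have hprod : σm 2 f * σm 2 g ≠ 0 := by rw [hσ2]; exact pow_ne_zero _ hp0
      exact right_ne_zero_of_mul hprod
    have htdg : (σm 2 g).totalDegree = 2 * (3 - a) := by
      rw [← assoc_tdeg hassocg.symm hσg0]
      exact hpn _
    have hle2 : 2 * (3 - a) ≤ g.totalDegree := by rw [← htdg]; exact tdeg_σm_le 2 g
    have hdf : f.totalDegree = 2 * a := by omega
    have hanz : a ≠ 0 := by
      intro ha0
      apply hfU
      have hf0td : f.totalDegree = 0 := by omega
      have hfc := eq_C_of_tdeg_zero hf0td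
      have hcne : MvPolynomial.coeff 0 f ≠ 0 := by
        intro hc; rw [hc, map_zero] at hfc; exact hf0 hfc
      rw [hfc]
      exact (isUnit_iff_ne_zero.mpr hcne).map MvPolynomial.C
    have ha3' : a ≠ 3 := by
      intro ha0
      apply hgU
      have hg0td : g.totalDegree = 0 := by omega
      have hgc := eq_C_of_tdeg_zero hg0td
      have hcne : MvPolynomial.coeff 0 g ≠ 0 := by
        intro hc; rw [hc, map_zero] at hgc; exact hg0 hgc
      rw [hgc]
      exact (isUnit_iff_ne_zero.mpr hcne).map MvPolynomial.C
    rcases (by omega : a = 1 ∨ a = 2) with ha | ha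
    · exact key hfg (by omega) (by omega)
    · exact key (f := g) (g := f) (by rw [mul_comm]; exact hfg) (by omega) (by omega)
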